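/- Let q : ℝ → ℝ be continuous on [0,1] and α, β, γ ∈ ℝ with sin(β − γ) ≠ 0. Let I be a finite subset of {1,2} × ℕ, and for (i,n) ∈ I let λ_{i,n} ∈ ℝ with n ↦ λ_{1,n} and n ↦ λ_{2,n} injective on the relevant indices, and let g_{i,n} : ℝ → ℝ be twice continuously differentiable, not identically zero on [0,1], satisfying −g_{i,n}'' + q g_{i,n} = λ_{i,n} g_{i,n} on [0,1], ∫₀¹ g_{i,n}² = 1, g_{i,n}(0)cos α + g_{i,n}'(0)sin α = 0, and g_{1,n}(1)cos β + g_{1,n}'(1)sin β = 0 for i = 1, g_{2,n}(1)cos γ + g_{2,n}'(1)sin γ = 0 for i = 2. Let ω_{i,n} > 0 and μ_{i,n} ∈ ℝ for (i,n) ∈ I. If Σ_{(i,n)∈I} ω_{i,n}(λ_{i,n} − μ_{i,n}) g_{i,n}(x)² = 0 for all x ∈ [0,1], then λ_{i,n} = μ_{i,n} for all (i,n) ∈ I. (Consequently, the only critical points of the least squares functional G(q) = Σ ω_{i,n}(λ_{q,i,n} − λ_{Q,i,n})² with finite index set are its global minima.) -/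

import Mathlib

open Set

private lemma det_lemma {a b c s c' s' : ℝ} (h1 : a*c + b*s = 0) (h2 : a*c' + b*s' = 0)
    (hab : a ≠ 0 ∨ b ≠ 0) : c*s' - c'*s = 0 := by
  have hA : a * (c*s' - c'*s) = 0 := by linear_combination s' * h1 - s * h2
  have hB : b * (c*s' - c'*s) = 0 := by linear_combination (-c') * h1 + c * h2
  rcases hab with h|h
  · exact (mul_eq_zero.mp hA).resolve_left h
  · exact (mul_eq_zero.mp hB).resolve_left h

private lemma parallel_bc {a b a2 b2 cb sb : ℝ} (hW : a * b2 - b * a2 = 0)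
    (hQ : a * cb + b * sb = 0) (hab : a ≠ 0 ∨ b ≠ 0) : a2 * cb + b2 * sb = 0 := by
  have hA : a * (a2 * cb + b2 * sb) = 0 := by linear_combination a2 * hQ + sb * hW
  have hB : b * (a2 * cb + b2 * sb) = 0 := by linear_combination b2 * hQ - cb * hW
  rcases hab with h|h
  · exact (mul_eq_zero.mp hA).resolve_left h
  · exact (mul_eq_zero.mp hB).resolve_left h

private lemma deriv_eq_on_Icc {f h : ℝ → ℝ} {d e x : ℝ} (hx : x ∈ Icc (0:ℝ) 1)
    (hf : HasDerivAt f d x) (hh : HasDerivAt h e x)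
    (hfh : ∀ y ∈ Icc (0:ℝ) 1, f y = h y) : d = e := by
  have h1 : HasDerivWithinAt h d (Icc (0:ℝ) 1) x :=
    (hf.hasDerivWithinAt).congr (fun y hy => (hfh y hy).symm) (hfh x hx).symm
  exact (uniqueDiffOn_Icc zero_lt_one x hx).eq_deriv _ h1 hh.hasDerivWithinAt

private lemma const_on_Icc {f : ℝ → ℝ} (hf : ∀ x ∈ Icc (0:ℝ) 1, HasDerivAt f 0 x) :
    ∀ x ∈ Icc (0:ℝ) 1, f x = f 0 :=
  constant_of_has_deriv_right_zero
    (fun y hy => (hf y hy).continuousAt.continuousWithinAt)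
    (fun y hy => ((hf y (Ico_subset_Icc_self hy)).hasDerivWithinAt))

private lemma ode_zero {q : ℝ → ℝ} (hq : ContinuousOn q (Icc (0:ℝ) 1)) (lam : ℝ)
    {g g' : ℝ → ℝ}
    (hg : ∀ x ∈ Icc (0:ℝ) 1, HasDerivAt g (g' x) x)
    (hg' : ∀ x ∈ Icc (0:ℝ) 1, HasDerivAt g' ((q x - lam) * g x) x)
    (h1 : g 1 = 0) (h1' : g' 1 = 0) : ∀ x ∈ Icc (0:ℝ) 1, g x = 0 := by
  obtain ⟨Cb, hCb⟩ := IsCompact.exists_bound_of_continuousOn isCompact_Icc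
    (hq.sub continuousOn_const (g := fun _ => lam))
  have hmem : ∀ t : ℝ, min 1 (max 0 t) ∈ Icc (0:ℝ) 1 :=
    fun t => ⟨le_min zero_le_one (le_max_left 0 t), min_le_left _ _⟩
  set Q : ℝ → ℝ := fun t => q (min 1 (max 0 t)) - lam with hQdef
  have hQb : ∀ t : ℝ, |Q t| ≤ Cb := fun t => hCb _ (hmem t)
  set K : NNReal := Real.toNNReal (max 1 Cb) with hKdef
  have hKcoe : (K : ℝ) = max 1 Cb :=
    Real.coe_toNNReal _ (le_trans zero_le_one (le_max_left _ _))
  have hv : ∀ t, LipschitzOnWith K (fun p : ℝ × ℝ => (p.2, Q t * p.1)) Set.univ := by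
    intro t
    refine LipschitzWith.lipschitzOnWith (LipschitzWith.of_dist_le_mul fun p p' => ?_)
    rw [Prod.dist_eq, Prod.dist_eq, hKcoe]
    simp only [Real.dist_eq]
    apply max_le
    · calc |p.2 - p'.2| ≤ max |p.1 - p'.1| |p.2 - p'.2| := le_max_right _ _
        _ ≤ max 1 Cb * max |p.1 - p'.1| |p.2 - p'.2| :=
          le_mul_of_one_le_left (le_trans (abs_nonneg _) (le_max_right _ _)) (le_max_left _ _)
    · rw [← mul_sub, abs_mul]
      exact mul_le_mul ((hQb t).trans (le_max_right _ _)) (le_max_left _ _) (abs_nonneg _)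
        (le_trans zero_le_one (le_max_left _ _))
  have hQeq : ∀ t ∈ Icc (0:ℝ) 1, Q t = q t - lam := by
    intro t ht
    simp only [hQdef]
    rw [max_eq_right ht.1, min_eq_right ht.2]
  have key : EqOn (fun t => (g t, g' t)) (fun _ => ((0:ℝ), (0:ℝ))) (Icc (0:ℝ) 1) := by
    apply ODE_solution_unique_of_mem_Icc_left (v := fun t (p : ℝ × ℝ) => (p.2, Q t * p.1))
      (s := fun _ => Set.univ) (K := K) (fun t _ => hv t)
    · exact fun y hy => ((hg y hy).continuousAt.continuousWithinAt.prodMk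
        (hg' y hy).continuousAt.continuousWithinAt)
    · intro t ht
      have htI : t ∈ Icc (0:ℝ) 1 := ⟨ht.1.le, ht.2⟩
      have h := ((hg t htI).prodMk (hg' t htI)).hasDerivWithinAt (s := Iic t)
      convert h using 1
      rw [hQeq t htI]
    · exact fun t _ => Set.mem_univ _
    · exact continuousOn_const
    · intro t ht
      convert (hasDerivAt_const t ((0:ℝ), (0:ℝ))).hasDerivWithinAt (s := Iic t) using 1
      simp
    · exact fun t _ => Set.mem_univ _
    · simp [h1, h1']
  intro x hx
  have := key hx
  simpa using congrArg Prod.fst this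

private lemma vandermonde_zero {ι : Type*} [DecidableEq ι] (I : Finset ι) (lam d : ι → ℝ)
    (hdist : ∀ p ∈ I, ∀ p' ∈ I, lam p = lam p' → p = p')
    (hmom : ∀ k : ℕ, ∑ p ∈ I, d p * lam p ^ k = 0) :
    ∀ p ∈ I, d p = 0 := by
  intro p0 hp0
  set P : Polynomial ℝ := ∏ p ∈ I.erase p0, (Polynomial.X - Polynomial.C (lam p)) with hP
  have heval : ∀ t : ℝ, P.eval t = ∏ p ∈ I.erase p0, (t - lam p) := by
    intro t
    rw [hP, Polynomial.eval_prod]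
    exact Finset.prod_congr rfl fun p _ => by simp
  have hsum : ∑ p ∈ I, d p * P.eval (lam p) = 0 := by
    have hterm : ∀ p ∈ I, d p * P.eval (lam p)
        = ∑ k ∈ Finset.range (P.natDegree + 1), P.coeff k * (d p * lam p ^ k) := by
      intro p _
      rw [Polynomial.eval_eq_sum_range, Finset.mul_sum]
      exact Finset.sum_congr rfl fun k _ => by ring
    rw [Finset.sum_congr rfl hterm, Finset.sum_comm]
    have : ∀ k ∈ Finset.range (P.natDegree + 1),
        (∑ p ∈ I, P.coeff k * (d p * lam p ^ k)) = 0 := by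
      intro k _
      rw [← Finset.mul_sum, hmom k, mul_zero]
    rw [Finset.sum_congr rfl this, Finset.sum_const_zero]
  have hzero : ∀ p ∈ I, p ≠ p0 → d p * P.eval (lam p) = 0 := by
    intro p hp hne
    rw [heval]
    rw [Finset.prod_eq_zero (Finset.mem_erase.mpr ⟨hne, hp⟩) (sub_self (lam p)), mul_zero]
  rw [Finset.sum_eq_single p0 (fun p hp hne => hzero p hp hne) (fun h => absurd hp0 h)] at hsum
  have hPne : P.eval (lam p0) ≠ 0 := by
    rw [heval]
    apply Finset.prod_ne_zero_iff.mpr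
    intro p hp
    rw [Finset.mem_erase] at hp
    intro hcon
    exact hp.1.symm (hdist p0 hp0 p hp.2 (by linarith [sub_eq_zero.mp hcon]))
  exact (mul_eq_zero.mp hsum).resolve_right hPne

private lemma moments_zero {ι : Type*} (I : Finset ι) (q : ℝ → ℝ) (α : ℝ)
    (c lam : ι → ℝ) (g g' : ι → ℝ → ℝ)
    (hg : ∀ p ∈ I, ∀ x ∈ Icc (0:ℝ) 1, HasDerivAt (g p) (g' p x) x)
    (hg' : ∀ p ∈ I, ∀ x ∈ Icc (0:ℝ) 1, HasDerivAt (g' p) ((q x - lam p) * g p x) x)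
    (hbc : ∀ p ∈ I, g p 0 * Real.cos α + g' p 0 * Real.sin α = 0)
    (hvan : ∀ x ∈ Icc (0:ℝ) 1, ∑ p ∈ I, c p * (g p x * g p x) = 0) :
    ∀ k : ℕ, ∀ x ∈ Icc (0:ℝ) 1,
      (∑ p ∈ I, c p * lam p ^ k * (g p x * g p x) = 0)
      ∧ (∑ p ∈ I, c p * lam p ^ k * (g' p x * g' p x) = 0) := by
  have hA' : ∀ (k : ℕ), ∀ x ∈ Icc (0:ℝ) 1,
      HasDerivAt (fun y => ∑ p ∈ I, c p * lam p ^ k * (g p y * g p y))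
        (2 * ∑ p ∈ I, c p * lam p ^ k * (g p x * g' p x)) x := by
    intro k x hx
    have h1 : HasDerivAt (fun y => ∑ p ∈ I, c p * lam p ^ k * (g p y * g p y))
        (∑ p ∈ I, c p * lam p ^ k * (g' p x * g p x + g p x * g' p x)) x :=
      HasDerivAt.fun_sum fun p hp => ((hg p hp x hx).mul (hg p hp x hx)).const_mul _
    have h2 : (∑ p ∈ I, c p * lam p ^ k * (g' p x * g p x + g p x * g' p x))
        = 2 * ∑ p ∈ I, c p * lam p ^ k * (g p x * g' p x) := by
      rw [Finset.mul_sum]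
      exact Finset.sum_congr rfl fun p _ => by ring
    rw [h2] at h1; exact h1
  have hB' : ∀ (k : ℕ), ∀ x ∈ Icc (0:ℝ) 1,
      HasDerivAt (fun y => ∑ p ∈ I, c p * lam p ^ k * (g p y * g' p y))
        ((∑ p ∈ I, c p * lam p ^ k * (g' p x * g' p x))
          + q x * (∑ p ∈ I, c p * lam p ^ k * (g p x * g p x))
          - (∑ p ∈ I, c p * lam p ^ (k+1) * (g p x * g p x))) x := by
    intro k x hx
    have h1 : HasDerivAt (fun y => ∑ p ∈ I, c p * lam p ^ k * (g p y * g' p y))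
        (∑ p ∈ I, c p * lam p ^ k * (g' p x * g' p x + g p x * ((q x - lam p) * g p x))) x :=
      HasDerivAt.fun_sum fun p hp => ((hg p hp x hx).mul (hg' p hp x hx)).const_mul _
    have h2 : (∑ p ∈ I, c p * lam p ^ k * (g' p x * g' p x + g p x * ((q x - lam p) * g p x)))
        = (∑ p ∈ I, c p * lam p ^ k * (g' p x * g' p x))
          + q x * (∑ p ∈ I, c p * lam p ^ k * (g p x * g p x))
          - (∑ p ∈ I, c p * lam p ^ (k+1) * (g p x * g p x)) := by
      rw [Finset.mul_sum, ← Finset.sum_add_distrib, ← Finset.sum_sub_distrib]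
      exact Finset.sum_congr rfl fun p _ => by ring
    rw [h2] at h1; exact h1
  have hC' : ∀ (k : ℕ), ∀ x ∈ Icc (0:ℝ) 1,
      HasDerivAt (fun y => ∑ p ∈ I, c p * lam p ^ k * (g' p y * g' p y))
        (2 * (q x * (∑ p ∈ I, c p * lam p ^ k * (g p x * g' p x))
          - (∑ p ∈ I, c p * lam p ^ (k+1) * (g p x * g' p x)))) x := by
    intro k x hx
    have h1 : HasDerivAt (fun y => ∑ p ∈ I, c p * lam p ^ k * (g' p y * g' p y))
        (∑ p ∈ I, c p * lam p ^ k *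
          ((q x - lam p) * g p x * g' p x + g' p x * ((q x - lam p) * g p x))) x :=
      HasDerivAt.fun_sum fun p hp => ((hg' p hp x hx).mul (hg' p hp x hx)).const_mul _
    have h2 : (∑ p ∈ I, c p * lam p ^ k *
          ((q x - lam p) * g p x * g' p x + g' p x * ((q x - lam p) * g p x)))
        = 2 * (q x * (∑ p ∈ I, c p * lam p ^ k * (g p x * g' p x))
          - (∑ p ∈ I, c p * lam p ^ (k+1) * (g p x * g' p x))) := by
      rw [Finset.mul_sum, ← Finset.sum_sub_distrib, Finset.mul_sum]
      exact Finset.sum_congr rfl fun p _ => by ring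
    rw [h2] at h1; exact h1
  have h0mem : (0:ℝ) ∈ Icc (0:ℝ) 1 := by norm_num
  have key : ∀ k : ℕ, ∀ x ∈ Icc (0:ℝ) 1,
      ∑ p ∈ I, c p * lam p ^ k * (g p x * g p x) = 0 := by
    intro k
    induction k with
    | zero => simpa [pow_zero, mul_one] using hvan
    | succ k ih =>
      have hBk : ∀ x ∈ Icc (0:ℝ) 1, ∑ p ∈ I, c p * lam p ^ k * (g p x * g' p x) = 0 := by
        intro x hx
        have h := deriv_eq_on_Icc hx (hA' k x hx) (hasDerivAt_const x (0:ℝ))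
          (fun y hy => ih y hy)
        linarith
      have hCk : ∀ x ∈ Icc (0:ℝ) 1,
          ∑ p ∈ I, c p * lam p ^ k * (g' p x * g' p x)
            = ∑ p ∈ I, c p * lam p ^ (k+1) * (g p x * g p x) := by
        intro x hx
        have h := deriv_eq_on_Icc hx (hB' k x hx) (hasDerivAt_const x (0:ℝ))
          (fun y hy => hBk y hy)
        have h0 := ih x hx
        rw [h0, mul_zero] at h
        linarith
      have hBk1 : ∀ x ∈ Icc (0:ℝ) 1,
          ∑ p ∈ I, c p * lam p ^ (k+1) * (g p x * g' p x) = 0 := by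
        intro x hx
        have h := deriv_eq_on_Icc hx (hC' k x hx) (hA' (k+1) x hx) hCk
        have h0 := hBk x hx
        rw [h0, mul_zero] at h
        linarith
      have hconst := const_on_Icc
        (f := fun y => ∑ p ∈ I, c p * lam p ^ (k+1) * (g p y * g p y)) (fun x hx => by
          have h := hA' (k+1) x hx
          rw [hBk1 x hx, mul_zero] at h
          exact h)
      have hA0 : ∑ p ∈ I, c p * lam p ^ (k+1) * (g p 0 * g p 0) = 0 := by
        by_cases hs : Real.sin α = 0
        · have hcos : Real.cos α ≠ 0 := by
            intro hc
            have := Real.sin_sq_add_cos_sq α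
            rw [hs, hc] at this; norm_num at this
          refine Finset.sum_eq_zero fun p hp => ?_
          have hb := hbc p hp
          rw [hs, mul_zero, add_zero] at hb
          rw [(mul_eq_zero.mp hb).resolve_right hcos]
          ring
        · have h1 : Real.sin α ^ 2 * (∑ p ∈ I, c p * lam p ^ k * (g' p 0 * g' p 0))
              = Real.cos α ^ 2 * (∑ p ∈ I, c p * lam p ^ k * (g p 0 * g p 0)) := by
            rw [Finset.mul_sum, Finset.mul_sum]
            refine Finset.sum_congr rfl fun p hp => ?_
            have hb := hbc p hp
            linear_combination (c p * lam p ^ k *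
              (Real.sin α * g' p 0 - Real.cos α * g p 0)) * hb
          rw [ih 0 h0mem, mul_zero] at h1
          have h2 : ∑ p ∈ I, c p * lam p ^ k * (g' p 0 * g' p 0) = 0 :=
            (mul_eq_zero.mp h1).resolve_left (pow_ne_zero _ hs)
          rw [← hCk 0 h0mem, h2]
      intro x hx
      simpa only [hA0] using hconst x hx
  have hB0 : ∀ k : ℕ, ∀ x ∈ Icc (0:ℝ) 1,
      ∑ p ∈ I, c p * lam p ^ k * (g p x * g' p x) = 0 := by
    intro k x hx
    have h := deriv_eq_on_Icc hx (hA' k x hx) (hasDerivAt_const x (0:ℝ))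
      (fun y hy => key k y hy)
    linarith
  intro k x hx
  refine ⟨key k x hx, ?_⟩
  have h := deriv_eq_on_Icc hx (hB' k x hx) (hasDerivAt_const x (0:ℝ))
    (fun y hy => hB0 k y hy)
  have h0 := key k x hx
  have h1 := key (k+1) x hx
  rw [h0, mul_zero, h1] at h
  linarith

/-- Critical points of the least squares functional with a finite index set are global
minima: if the weighted combination `Σ_{(i,n)∈I} ω_{i,n}(λ_{i,n} − μ_{i,n}) g_{i,n}²`
of squared normalized eigenfunctions vanishes identically on `[0,1]` (with all weights
`ω_{i,n} > 0`), then `λ_{i,n} = μ_{i,n}` for all `(i,n) ∈ I`. -/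
theorem critical_point_is_global_minimum
    (q : ℝ → ℝ) (hq : ContinuousOn q (Set.Icc (0:ℝ) 1))
    (α β γ : ℝ) (hβγ : Real.sin (β - γ) ≠ 0)
    (I : Finset (ℕ × ℕ)) (hI : ∀ p ∈ I, p.1 ∈ ({1, 2} : Set ℕ))
    (lam : ℕ → ℕ → ℝ)
    (hinj1 : ∀ n m : ℕ, (1, n) ∈ I → (1, m) ∈ I → lam 1 n = lam 1 m → n = m)
    (hinj2 : ∀ n m : ℕ, (2, n) ∈ I → (2, m) ∈ I → lam 2 n = lam 2 m → n = m)
    (g g' g'' : ℕ → ℕ → ℝ → ℝ)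
    (hg : ∀ p ∈ I, ∀ x ∈ Set.Icc (0:ℝ) 1,
      HasDerivAt (g p.1 p.2) (g' p.1 p.2 x) x ∧ HasDerivAt (g' p.1 p.2) (g'' p.1 p.2 x) x)
    (hg'' : ∀ p ∈ I, ContinuousOn (g'' p.1 p.2) (Set.Icc (0:ℝ) 1))
    (hne : ∀ p ∈ I, ∃ x ∈ Set.Icc (0:ℝ) 1, g p.1 p.2 x ≠ 0)
    (heq : ∀ p ∈ I, ∀ x ∈ Set.Icc (0:ℝ) 1,
      -g'' p.1 p.2 x + q x * g p.1 p.2 x = lam p.1 p.2 * g p.1 p.2 x)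
    (hnorm : ∀ p ∈ I, (∫ x in (0:ℝ)..1, (g p.1 p.2 x)^2) = 1)
    (hbc0 : ∀ p ∈ I, g p.1 p.2 0 * Real.cos α + g' p.1 p.2 0 * Real.sin α = 0)
    (hbc1β : ∀ n : ℕ, (1, n) ∈ I → g 1 n 1 * Real.cos β + g' 1 n 1 * Real.sin β = 0)
    (hbc1γ : ∀ n : ℕ, (2, n) ∈ I → g 2 n 1 * Real.cos γ + g' 2 n 1 * Real.sin γ = 0)
    (ω : ℕ × ℕ → ℝ) (hω : ∀ p ∈ I, 0 < ω p)
    (μ : ℕ × ℕ → ℝ)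
    (hvanish : ∀ x ∈ Set.Icc (0:ℝ) 1,
      ∑ p ∈ I, ω p * (lam p.1 p.2 - μ p) * (g p.1 p.2 x)^2 = 0) :
    ∀ p ∈ I, lam p.1 p.2 = μ p := by
  classical
  have h1mem : (1:ℝ) ∈ Set.Icc (0:ℝ) 1 := by norm_num
  have hgd : ∀ p ∈ I, ∀ x ∈ Set.Icc (0:ℝ) 1,
      HasDerivAt (g' p.1 p.2) ((q x - lam p.1 p.2) * g p.1 p.2 x) x := by
    intro p hp x hx
    have h := (hg p hp x hx).2
    have he : g'' p.1 p.2 x = (q x - lam p.1 p.2) * g p.1 p.2 x := by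
      linear_combination -(heq p hp x hx)
    rwa [he] at h
  have hend : ∀ p ∈ I, g p.1 p.2 1 ≠ 0 ∨ g' p.1 p.2 1 ≠ 0 := by
    intro p hp
    by_contra hcon
    push_neg at hcon
    obtain ⟨x, hx, hgx⟩ := hne p hp
    exact hgx (ode_zero hq (lam p.1 p.2) (fun x hx => (hg p hp x hx).1)
      (fun x hx => hgd p hp x hx) hcon.1 hcon.2 x hx)
  have hcs : Real.cos α ≠ 0 ∨ Real.sin α ≠ 0 := by
    by_contra hcon
    push_neg at hcon
    have := Real.sin_sq_add_cos_sq α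
    rw [hcon.1, hcon.2] at this; norm_num at this
  have key12 : ∀ n m : ℕ, (1,n) ∈ I → (2,m) ∈ I → lam 1 n = lam 2 m → False := by
    intro n m hn hm hl
    have hW : ∀ x ∈ Set.Icc (0:ℝ) 1,
        g 1 n x * g' 2 m x - g' 1 n x * g 2 m x
          = g 1 n 0 * g' 2 m 0 - g' 1 n 0 * g 2 m 0 := by
      apply const_on_Icc
      intro x hx
      have h1 := (hg (1,n) hn x hx).1
      have h2 := hgd (1,n) hn x hx
      have h3 := (hg (2,m) hm x hx).1
      have h4 := hgd (2,m) hm x hx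
      have h5 := (h1.mul h4).sub (h2.mul h3)
      refine h5.congr_deriv ?_
      rw [hl]; ring
    have hW0 : g 1 n 0 * g' 2 m 0 - g 2 m 0 * g' 1 n 0 = 0 :=
      det_lemma (a := Real.cos α) (b := Real.sin α) (c := g 1 n 0) (s := g' 1 n 0)
        (c' := g 2 m 0) (s' := g' 2 m 0)
        (by linear_combination hbc0 (1,n) hn) (by linear_combination hbc0 (2,m) hm) hcs
    have hW1 : g 1 n 1 * g' 2 m 1 - g' 1 n 1 * g 2 m 1 = 0 := by
      rw [hW 1 h1mem]; linear_combination hW0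
    have hpar : g 2 m 1 * Real.cos β + g' 2 m 1 * Real.sin β = 0 :=
      parallel_bc (a := g 1 n 1) (b := g' 1 n 1) (a2 := g 2 m 1) (b2 := g' 2 m 1)
        hW1 (hbc1β n hn) (hend (1,n) hn)
    have hdet : Real.cos β * Real.sin γ - Real.cos γ * Real.sin β = 0 :=
      det_lemma (a := g 2 m 1) (b := g' 2 m 1) (c := Real.cos β) (s := Real.sin β)
        (c' := Real.cos γ) (s' := Real.sin γ)
        (by linear_combination hpar) (by linear_combination hbc1γ m hm) (hend (2,m) hm)
    apply hβγ
    rw [Real.sin_sub]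
    linarith
  have hdist : ∀ p ∈ I, ∀ p' ∈ I, lam p.1 p.2 = lam p'.1 p'.2 → p = p' := by
    intro p hp p' hp' hl
    have hi := hI p hp
    have hj := hI p' hp'
    simp only [Set.mem_insert_iff, Set.mem_singleton_iff] at hi hj
    have hmem1 : ∀ (r : ℕ × ℕ), r ∈ I → r.1 = 1 → (1, r.2) ∈ I := by
      intro r hr h1; rw [← h1]; exact hr
    have hmem2 : ∀ (r : ℕ × ℕ), r ∈ I → r.1 = 2 → (2, r.2) ∈ I := by
      intro r hr h1; rw [← h1]; exact hr
    rcases hi with h1 | h1 <;> rcases hj with h2 | h2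
    · refine Prod.ext_iff.mpr ⟨h1.trans h2.symm, ?_⟩
      rw [h1, h2] at hl
      exact hinj1 p.2 p'.2 (hmem1 p hp h1) (hmem1 p' hp' h2) hl
    · exfalso
      rw [h1, h2] at hl
      exact key12 p.2 p'.2 (hmem1 p hp h1) (hmem2 p' hp' h2) hl
    · exfalso
      rw [h1, h2] at hl
      exact key12 p'.2 p.2 (hmem1 p' hp' h2) (hmem2 p hp h1) hl.symm
    · refine Prod.ext_iff.mpr ⟨h1.trans h2.symm, ?_⟩
      rw [h1, h2] at hl
      exact hinj2 p.2 p'.2 (hmem2 p hp h1) (hmem2 p' hp' h2) hl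
  have hvan : ∀ x ∈ Set.Icc (0:ℝ) 1,
      ∑ p ∈ I, ω p * (lam p.1 p.2 - μ p) * (g p.1 p.2 x * g p.1 p.2 x) = 0 := by
    intro x hx
    rw [← hvanish x hx]
    exact Finset.sum_congr rfl fun p _ => by ring
  have hmom := moments_zero I q α (fun p => ω p * (lam p.1 p.2 - μ p))
    (fun p => lam p.1 p.2) (fun p => g p.1 p.2) (fun p => g' p.1 p.2)
    (fun p hp x hx => (hg p hp x hx).1) (fun p hp x hx => hgd p hp x hx)
    (fun p hp => hbc0 p hp) hvan
  have hmomk : ∀ k : ℕ, ∑ p ∈ I,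
      (ω p * (lam p.1 p.2 - μ p)
        * (g p.1 p.2 1 * g p.1 p.2 1 + g' p.1 p.2 1 * g' p.1 p.2 1)) * lam p.1 p.2 ^ k
      = 0 := by
    intro k
    have h1 : ∑ p ∈ I, ω p * (lam p.1 p.2 - μ p) * lam p.1 p.2 ^ k
        * (g p.1 p.2 1 * g p.1 p.2 1) = 0 := (hmom k 1 h1mem).1
    have h2 : ∑ p ∈ I, ω p * (lam p.1 p.2 - μ p) * lam p.1 p.2 ^ k
        * (g' p.1 p.2 1 * g' p.1 p.2 1) = 0 := (hmom k 1 h1mem).2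
    have h3 : ∑ p ∈ I,
        (ω p * (lam p.1 p.2 - μ p)
          * (g p.1 p.2 1 * g p.1 p.2 1 + g' p.1 p.2 1 * g' p.1 p.2 1)) * lam p.1 p.2 ^ k
        = (∑ p ∈ I, ω p * (lam p.1 p.2 - μ p) * lam p.1 p.2 ^ k
            * (g p.1 p.2 1 * g p.1 p.2 1))
          + ∑ p ∈ I, ω p * (lam p.1 p.2 - μ p) * lam p.1 p.2 ^ k
            * (g' p.1 p.2 1 * g' p.1 p.2 1) := by
      rw [← Finset.sum_add_distrib]
      exact Finset.sum_congr rfl fun p _ => by ring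
    rw [h3, h1, h2, add_zero]
  have hvdm := vandermonde_zero I (fun p => lam p.1 p.2)
    (fun p => ω p * (lam p.1 p.2 - μ p)
      * (g p.1 p.2 1 * g p.1 p.2 1 + g' p.1 p.2 1 * g' p.1 p.2 1)) hdist hmomk
  intro p hp
  have hw : 0 < g p.1 p.2 1 * g p.1 p.2 1 + g' p.1 p.2 1 * g' p.1 p.2 1 := by
    rcases hend p hp with h | h
    · exact add_pos_of_pos_of_nonneg (mul_self_pos.mpr h) (mul_self_nonneg _)
    · exact add_pos_of_nonneg_of_pos (mul_self_nonneg _) (mul_self_pos.mpr h)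
  have h := hvdm p hp
  have hcp : ω p * (lam p.1 p.2 - μ p) = 0 :=
    (mul_eq_zero.mp h).resolve_right (ne_of_gt hw)
  have hlm := (mul_eq_zero.mp hcp).resolve_left (ne_of_gt (hω p hp))
  linarith
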